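/- Let H be a norming graph with n vertices and m edges that is connected. Then the map a ↦ W_{n/m, a} is a linear isometric embedding of ℓ^m into the normed space (W_H, ‖·‖_H); in particular ‖a‖_m^m = t(H, W_{n/m,a}) for all a ∈ ℓ^m. -/

import Mathlib

open MeasureTheory

noncomputable def sym2Val {V Ω : Type*} (W : Ω → Ω → ℝ) (x : V → Ω) : Sym2 V → ℝ :=
  Sym2.lift ⟨fun i j => (W (x i) (x j) + W (x j) (x i)) / 2, fun i j => by simp [add_comm]⟩

/-- Homomorphism density `t(G, W)` of a graph `G` in a symmetric kernel `W`. -/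
noncomputable def homDensity {V : Type} [Fintype V] {Ω : Type*} [MeasurableSpace Ω]
    (G : SimpleGraph V) (μ : Measure Ω) (W : Ω → Ω → ℝ) : ℝ :=
  ∫ x : V → Ω, ∏ᶠ e ∈ G.edgeSet, sym2Val W x e ∂(Measure.pi fun _ => μ)

/-- Decorated homomorphism density `t(G, w)` for a decoration `w` of the edges. -/
noncomputable def decDensity {V : Type} [Fintype V] {Ω : Type*} [MeasurableSpace Ω]
    (G : SimpleGraph V) (μ : Measure Ω) (w : Sym2 V → Ω → Ω → ℝ) : ℝ :=
  ∫ x : V → Ω, ∏ᶠ e ∈ G.edgeSet, sym2Val (w e) x e ∂(Measure.pi fun _ => μ)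

/-- Bounded symmetric measurable kernel. -/
def GoodKernel {Ω : Type*} [MeasurableSpace Ω] (W : Ω → Ω → ℝ) : Prop :=
  Measurable (Function.uncurry W) ∧ (∀ x y, W x y = W y x) ∧ ∃ C, ∀ x y, |W x y| ≤ C

/-- Hatami's Hölder-type characterisation of weakly norming graphs. -/
def WeaklyNorming {V : Type} [Fintype V] (G : SimpleGraph V) : Prop :=
  ∀ (Ω : Type) (_ : MeasurableSpace Ω) (μ : Measure Ω), IsProbabilityMeasure μ →
    ∀ w : Sym2 V → Ω → Ω → ℝ, (∀ e, GoodKernel (w e)) → (∀ e x y, 0 ≤ w e x y) →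
      decDensity G μ w ^ G.edgeSet.ncard ≤ ∏ᶠ e ∈ G.edgeSet, homDensity G μ (w e)

/-- Hatami's Hölder-type characterisation of seminorming graphs. -/
def Seminorming {V : Type} [Fintype V] (G : SimpleGraph V) : Prop :=
  ∀ (Ω : Type) (_ : MeasurableSpace Ω) (μ : Measure Ω), IsProbabilityMeasure μ →
    ∀ w : Sym2 V → Ω → Ω → ℝ, (∀ e, GoodKernel (w e)) →
      decDensity G μ w ^ G.edgeSet.ncard ≤ ∏ᶠ e ∈ G.edgeSet, |homDensity G μ (w e)|

/-- Norming: seminorming and `‖·‖_H` vanishes only on a.e.-zero kernels. -/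
def Norming {V : Type} [Fintype V] (G : SimpleGraph V) : Prop :=
  Seminorming G ∧
    ∀ (Ω : Type) (_ : MeasurableSpace Ω) (μ : Measure Ω), IsProbabilityMeasure μ →
      ∀ W : Ω → Ω → ℝ, GoodKernel W → homDensity G μ W = 0 →
        ∀ᵐ p ∂(μ.prod μ), W p.1 p.2 = 0

/-- Hatami's embedding of `ℓ^m` into `(W_H, ‖·‖_H)` for a connected norming graph `H`
with `n` vertices and `m` edges: with `Ω` partitioned into blocks `A i` of measure
`2^{-(i+1)}` and `Φ a` the kernel `W_{n/m, a}` (equal to `2^{(i+1)·n/m} · a i` on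
`A i × A i` and `0` elsewhere), the map `a ↦ Φ a` is linear and satisfies
`t(H, Φ a) = ∑ i, |a i| ^ m = ‖a‖_m ^ m` for all `a ∈ ℓ^m`; hence it is a linear
isometric embedding of `ℓ^m` into `(W_H, ‖·‖_H)`. -/
theorem ellp_embeds_isometrically {Ω : Type} [MeasurableSpace Ω] (μ : Measure Ω)
    [IsProbabilityMeasure μ]
    (A : ℕ → Set Ω) (hmeas : ∀ i, MeasurableSet (A i))
    (hdisj : Pairwise (Function.onFun Disjoint A))
    (hcover : (⋃ i, A i) = Set.univ)
    (hμ : ∀ i, μ (A i) = ENNReal.ofReal ((1 / 2 : ℝ) ^ (i + 1)))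
    {V : Type} [Fintype V] (H : SimpleGraph V) (hconn : H.Connected)
    (hnorming : Norming H)
    (n m : ℕ) (hn : n = Fintype.card V) (hm : m = H.edgeSet.ncard) (hm1 : 1 ≤ m)
    (Φ : (ℕ → ℝ) → Ω → Ω → ℝ)
    (hΦval : ∀ a i x y, x ∈ A i → y ∈ A i →
      Φ a x y = 2 ^ (((i : ℝ) + 1) * ((n : ℝ) / m)) * a i)
    (hΦzero : ∀ a x y, (¬ ∃ i, x ∈ A i ∧ y ∈ A i) → Φ a x y = 0) :
    (∀ (a b : ℕ → ℝ) (c : ℝ),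
        Φ (fun i => a i + c * b i) = fun x y => Φ a x y + c * Φ b x y) ∧
    (∀ a : ℕ → ℝ, Summable (fun i => |a i| ^ m) →
        homDensity H μ (Φ a) = ∑' i, |a i| ^ m ∧
        |homDensity H μ (Φ a)| ^ ((1 : ℝ) / m) = (∑' i, |a i| ^ m) ^ ((1 : ℝ) / m)) := by
  
  classical
  have hneV : Nonempty V := hconn.nonempty
  -- the scaling constants
  let c : ℕ → ℝ := fun k => 2 ^ (((k : ℝ) + 1) * ((n : ℝ) / m))
  have hΦval' : ∀ a i x y, x ∈ A i → y ∈ A i → Φ a x y = c i * a i := hΦval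
  have hcpos : ∀ k, 0 < c k := fun k => Real.rpow_pos_of_pos (by norm_num) _
  -- uniqueness of blocks and existence
  have huniq : ∀ {ω : Ω} {i j : ℕ}, ω ∈ A i → ω ∈ A j → i = j := by
    intro ω i j hi hj
    by_contra hne
    exact Set.disjoint_left.1 (hdisj hne) hi hj
  have hexists : ∀ ω : Ω, ∃ i, ω ∈ A i := by
    intro ω
    have : ω ∈ ⋃ i, A i := hcover ▸ Set.mem_univ ω
    exact Set.mem_iUnion.1 this
  -- block index
  let idx : Ω → ℕ := fun ω => (hexists ω).choose
  have hidx : ∀ ω, ω ∈ A (idx ω) := fun ω => (hexists ω).choose_spec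
  -- symmetry of the kernels
  have hsymm : ∀ a (x y : Ω), Φ a x y = Φ a y x := by
    intro a x y
    by_cases h : ∃ i, x ∈ A i ∧ y ∈ A i
    · obtain ⟨i, hx, hy⟩ := h
      rw [hΦval' a i x y hx hy, hΦval' a i y x hy hx]
    · have h' : ¬ ∃ i, y ∈ A i ∧ x ∈ A i := by rintro ⟨i, hy, hx⟩; exact h ⟨i, hx, hy⟩
      rw [hΦzero a x y h, hΦzero a y x h']
  -- key arithmetic identity
  have hckey : ∀ k, c k ^ m * ((1 / 2 : ℝ) ^ (k + 1)) ^ n = 1 := by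
    intro k
    have hmne : (m : ℝ) ≠ 0 := Nat.cast_ne_zero.2 (by omega)
    have h1 : c k ^ m = (2 : ℝ) ^ ((k + 1) * n : ℕ) := by
      have e1 : c k ^ m = (2 : ℝ) ^ (((((k : ℝ) + 1) * ((n : ℝ) / m))) * (m : ℝ)) := by
        rw [Real.rpow_mul (by norm_num : (0:ℝ) ≤ 2), Real.rpow_natCast]
      have e2 : ((((k : ℝ) + 1) * ((n : ℝ) / m))) * (m : ℝ) = (((k + 1) * n : ℕ) : ℝ) := by
        push_cast
        field_simp
      rw [e1, e2, Real.rpow_natCast]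
    have h2 : ((1 / 2 : ℝ) ^ (k + 1)) ^ n = ((2 : ℝ) ^ ((k + 1) * n : ℕ))⁻¹ := by
      rw [← pow_mul, one_div, inv_pow]
    rw [h1, h2, mul_inv_cancel₀ (by positivity)]
  -- blocks of the product space
  let S : ℕ → Set (V → Ω) := fun k => Set.univ.pi fun _ => A k
  have hSmeas : ∀ k, MeasurableSet (S k) := fun k => MeasurableSet.univ_pi fun _ => hmeas k
  have hSmeasure : ∀ k, (Measure.pi fun _ : V => μ) (S k)
      = ENNReal.ofReal (((1 / 2 : ℝ) ^ (k + 1)) ^ n) := by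
    intro k
    rw [show S k = Set.univ.pi (fun _ : V => A k) from rfl, Measure.pi_pi]
    simp only [hμ]
    rw [Finset.prod_const, ← ENNReal.ofReal_pow (by positivity)]
    congr 2
    rw [Finset.card_univ, hn]
  -- the edge finset
  have hfin : H.edgeSet.Finite := Set.toFinite _
  have hcard : hfin.toFinset.card = m := by
    rw [hm, Set.ncard_eq_toFinset_card _ hfin]
  have hfinprod : ∀ (a) (x : V → Ω),
      (∏ᶠ e ∈ H.edgeSet, sym2Val (Φ a) x e) = ∏ e ∈ hfin.toFinset, sym2Val (Φ a) x e := by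
    intro a x
    rw [← finprod_mem_coe_finset, Set.Finite.coe_toFinset]
  have hsym2 : ∀ a (x : V → Ω) (i j : V), sym2Val (Φ a) x s(i, j) = Φ a (x i) (x j) := by
    intro a x i j
    simp only [sym2Val, Sym2.lift_mk]
    rw [hsymm a (x j) (x i)]
    ring
  -- pointwise evaluation of the edge product
  have hstep : ∀ (a) (x : V → Ω),
      (∏ e ∈ hfin.toFinset, sym2Val (Φ a) x e)
        = ∑' k, (S k).indicator (fun _ => (c k * a k) ^ m) x := by
    intro a x
    by_cases hc : ∃ k, ∀ v, x v ∈ A k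
    · obtain ⟨k, hk⟩ := hc
      have hxS : x ∈ S k := fun v _ => hk v
      have h1 : (∏ e ∈ hfin.toFinset, sym2Val (Φ a) x e) = (c k * a k) ^ m := by
        have hconst : ∀ e ∈ hfin.toFinset, sym2Val (Φ a) x e = c k * a k := by
          intro e he
          induction e using Sym2.ind with
          | _ i j => rw [hsym2, hΦval' a k (x i) (x j) (hk i) (hk j)]
        rw [Finset.prod_congr rfl hconst, Finset.prod_const, hcard]
      rw [h1, tsum_eq_single k ?_]
      · rw [Set.indicator_of_mem hxS]
      · intro j hj
        apply Set.indicator_of_notMem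
        intro hxj
        obtain ⟨v0⟩ := hneV
        exact hj (huniq (hxj v0 (Set.mem_univ v0)) (hk v0))
    · have hiconst : ¬ ∀ u v : V, H.Adj u v → idx (x u) = idx (x v) := by
        intro hadj
        apply hc
        obtain ⟨v0⟩ := hneV
        refine ⟨idx (x v0), fun v => ?_⟩
        have hwalk : ∀ {u w : V} (_ : H.Walk u w), idx (x u) = idx (x w) := by
          intro u w p
          induction p with
          | nil => rfl
          | cons h p ih => exact (hadj _ _ h).trans ih
        have h := hwalk (hconn v0 v).some
        rw [h]
        exact hidx (x v)
      push_neg at hiconst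
      obtain ⟨u, v, huv, hne⟩ := hiconst
      have hmem : s(u, v) ∈ hfin.toFinset := hfin.mem_toFinset.2 (H.mem_edgeSet.2 huv)
      have hzero : sym2Val (Φ a) x s(u, v) = 0 := by
        rw [hsym2]
        apply hΦzero
        rintro ⟨j, hxu, hxv⟩
        exact hne ((huniq hxu (hidx (x u))).symm.trans (huniq hxv (hidx (x v))))
      rw [Finset.prod_eq_zero hmem hzero]
      have hzero' : ∀ k, (S k).indicator (fun _ => (c k * a k) ^ m) x = 0 := by
        intro k
        apply Set.indicator_of_notMem
        intro hxk
        exact hc ⟨k, fun v => hxk v (Set.mem_univ v)⟩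
      simp only [hzero', tsum_zero]
  -- the main density computation
  have key : ∀ a : ℕ → ℝ, Summable (fun i => |a i| ^ m) →
      homDensity H μ (Φ a) = ∑' i, (a i) ^ m := by
    intro a ha
    have hg_meas : ∀ k, AEStronglyMeasurable ((S k).indicator (fun _ => (c k * a k) ^ m))
        (Measure.pi fun _ : V => μ) :=
      fun k => (measurable_const.indicator (hSmeas k)).aestronglyMeasurable
    have hlin : ∀ k, (∫⁻ x, ‖(S k).indicator (fun _ => (c k * a k) ^ m) x‖₊
        ∂(Measure.pi fun _ : V => μ)) = ENNReal.ofReal (|a k| ^ m) := by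
      intro k
      have heq : ∀ x, (‖(S k).indicator (fun _ => (c k * a k) ^ m) x‖₊ : ENNReal)
          = (S k).indicator (fun _ => ENNReal.ofReal (|(c k * a k) ^ m|)) x := by
        intro x
        by_cases hx : x ∈ S k
        · rw [Set.indicator_of_mem hx, Set.indicator_of_mem hx]
          exact Real.enorm_eq_ofReal_abs _
        · rw [Set.indicator_of_notMem hx, Set.indicator_of_notMem hx]
          simp
      rw [lintegral_congr heq, lintegral_indicator_const (hSmeas k), hSmeasure k,
        ← ENNReal.ofReal_mul (abs_nonneg _)]
      congr 1
      have habs : |(c k * a k) ^ m| = c k ^ m * |a k| ^ m := by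
        rw [abs_pow, abs_mul, abs_of_pos (hcpos k), mul_pow]
      rw [habs]
      calc c k ^ m * |a k| ^ m * ((1 / 2 : ℝ) ^ (k + 1)) ^ n
          = |a k| ^ m * (c k ^ m * ((1 / 2 : ℝ) ^ (k + 1)) ^ n) := by ring
        _ = |a k| ^ m := by rw [hckey k, mul_one]
    have hsum_ne : (∑' k, ∫⁻ x, ‖(S k).indicator (fun _ => (c k * a k) ^ m) x‖₊
        ∂(Measure.pi fun _ : V => μ)) ≠ ⊤ := by
      simp only [hlin]
      rw [← ENNReal.ofReal_tsum_of_nonneg (fun k => by positivity) ha]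
      exact ENNReal.ofReal_ne_top
    have hint : ∀ k, (∫ x, (S k).indicator (fun _ => (c k * a k) ^ m) x
        ∂(Measure.pi fun _ : V => μ)) = (a k) ^ m := by
      intro k
      rw [integral_indicator_const _ (hSmeas k), measureReal_def, hSmeasure k,
        ENNReal.toReal_ofReal (by positivity), smul_eq_mul, mul_pow]
      calc ((1 / 2 : ℝ) ^ (k + 1)) ^ n * (c k ^ m * a k ^ m)
          = a k ^ m * (c k ^ m * ((1 / 2 : ℝ) ^ (k + 1)) ^ n) := by ring
        _ = a k ^ m := by rw [hckey k, mul_one]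
    calc homDensity H μ (Φ a)
        = ∫ x, ∑' k, (S k).indicator (fun _ => (c k * a k) ^ m) x
            ∂(Measure.pi fun _ : V => μ) := by
          unfold homDensity
          refine integral_congr_ae (Filter.Eventually.of_forall fun x => ?_)
          exact (hfinprod a x).trans (hstep a x)
      _ = ∑' k, ∫ x, (S k).indicator (fun _ => (c k * a k) ^ m) x
            ∂(Measure.pi fun _ : V => μ) := integral_tsum hg_meas hsum_ne
      _ = ∑' k, (a k) ^ m := tsum_congr hint
  -- the number of edges is even
  have hEven : Even m := by
    by_contra hodd
    rw [Nat.not_even_iff_odd] at hodd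
    set a' : ℕ → ℝ := fun i => if i = 0 then 1 else if i = 1 then -1 else 0 with ha'
    have ha'0 : a' 0 = 1 := by simp [ha']
    have ha'1 : a' 1 = -1 := by simp [ha']
    have ha'big : ∀ i, i ≠ 0 → i ≠ 1 → a' i = 0 := by
      intro i h0 h1; simp [ha', h0, h1]
    have ha'sum : Summable (fun i => |a' i| ^ m) := by
      apply summable_of_ne_finset_zero (s := ({0, 1} : Finset ℕ))
      intro i hi
      simp only [Finset.mem_insert, Finset.mem_singleton, not_or] at hi
      rw [ha'big i hi.1 hi.2, abs_zero, zero_pow (by omega : m ≠ 0)]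
    have h0 : homDensity H μ (Φ a') = 0 := by
      rw [key a' ha'sum, tsum_eq_sum (s := ({0, 1} : Finset ℕ)) ?_]
      · rw [Finset.sum_insert (by norm_num), Finset.sum_singleton, ha'0, ha'1,
          one_pow, hodd.neg_one_pow]
        ring
      · intro i hi
        simp only [Finset.mem_insert, Finset.mem_singleton, not_or] at hi
        rw [ha'big i hi.1 hi.2, zero_pow (by omega : m ≠ 0)]
    have hGood : GoodKernel (Φ a') := by
      refine ⟨?_, fun x y => hsymm a' x y, ⟨c 0 + c 1, ?_⟩⟩
      · have hrep : Function.uncurry (Φ a') = fun p : Ω × Ω =>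
            ∑ j ∈ Finset.range 2, (A j ×ˢ A j).indicator (fun _ => c j * a' j) p := by
          funext p
          show Φ a' p.1 p.2 = _
          by_cases h : ∃ i, p.1 ∈ A i ∧ p.2 ∈ A i
          · obtain ⟨i, hx, hy⟩ := h
            have hmem : ∀ j, p ∈ A j ×ˢ A j ↔ j = i := by
              intro j
              constructor
              · intro hj; exact huniq hj.1 hx
              · rintro rfl; exact ⟨hx, hy⟩
            rw [hΦval' a' i p.1 p.2 hx hy]
            by_cases hi2 : i < 2
            · rw [Finset.sum_eq_single i]
              · rw [Set.indicator_of_mem ((hmem i).2 rfl)]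
              · intro j _ hji
                exact Set.indicator_of_notMem (fun hj => hji ((hmem j).1 hj)) _
              · intro hir; exact absurd (Finset.mem_range.2 hi2) hir
            · rw [ha'big i (by omega) (by omega), mul_zero]
              symm
              apply Finset.sum_eq_zero
              intro j hj
              apply Set.indicator_of_notMem
              intro hmemj
              have := (hmem j).1 hmemj
              have hj2 := Finset.mem_range.1 hj
              omega
          · rw [hΦzero a' p.1 p.2 h]
            symm
            apply Finset.sum_eq_zero
            intro j _
            apply Set.indicator_of_notMem
            intro hmemj
            exact h ⟨j, hmemj.1, hmemj.2⟩
        rw [hrep]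
        exact Finset.measurable_sum _
          (fun j _ => measurable_const.indicator ((hmeas j).prod (hmeas j)))
      · intro x y
        by_cases h : ∃ i, x ∈ A i ∧ y ∈ A i
        · obtain ⟨i, hx, hy⟩ := h
          rw [hΦval' a' i x y hx hy]
          have h0c : 0 < c 0 := hcpos 0
          have h1c : 0 < c 1 := hcpos 1
          rcases i with _ | _ | i
          · rw [ha'0, mul_one, abs_of_pos h0c]; linarith
          · rw [ha'1, mul_neg_one, abs_neg, abs_of_pos h1c]; linarith
          · rw [ha'big (i + 2) (by omega) (by omega), mul_zero, abs_zero]; positivity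
        · rw [hΦzero a' x y h, abs_zero]
          have h0c : 0 < c 0 := hcpos 0
          have h1c : 0 < c 1 := hcpos 1
          linarith
    have hae := hnorming.2 Ω ‹MeasurableSpace Ω› μ ‹IsProbabilityMeasure μ› (Φ a') hGood h0
    have hnull : (μ.prod μ) {p : Ω × Ω | ¬ Φ a' p.1 p.2 = 0} = 0 := by
      simpa [ae_iff] using hae
    have hsub : (A 0 ×ˢ A 0 : Set (Ω × Ω)) ⊆ {p : Ω × Ω | ¬ Φ a' p.1 p.2 = 0} := by
      intro p hp
      rw [Set.mem_setOf_eq, hΦval' a' 0 p.1 p.2 hp.1 hp.2, ha'0, mul_one]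
      exact (hcpos 0).ne'
    have hfinal := measure_mono_null hsub hnull
    rw [Measure.prod_prod, hμ 0] at hfinal
    rw [mul_eq_zero, or_self, ENNReal.ofReal_eq_zero] at hfinal
    norm_num at hfinal
  -- assemble the result
  refine ⟨?_, ?_⟩
  · intro a b cc
    funext x y
    by_cases h : ∃ i, x ∈ A i ∧ y ∈ A i
    · obtain ⟨i, hx, hy⟩ := h
      rw [hΦval' _ i x y hx hy, hΦval' a i x y hx hy, hΦval' b i x y hx hy]
      ring
    · rw [hΦzero _ x y h, hΦzero a x y h, hΦzero b x y h]
      ring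
  · intro a ha
    have h1 : homDensity H μ (Φ a) = ∑' i, |a i| ^ m := by
      rw [key a ha]
      exact tsum_congr fun i => (hEven.pow_abs (a i)).symm
    refine ⟨h1, ?_⟩
    rw [h1, abs_of_nonneg (tsum_nonneg fun i => by positivity)]
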